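/- Suppose the operator norm of P (on all of ℝ^N) is at most λ. Then ‖f(X)‖_F ≤ s·λ·‖X‖_F for every X ∈ ℝ^{N×C}. In particular, for a sequence of such layers f_l with s := sup_l s_l satisfying sλ < 1, the iterates X^{(l+1)} = f_l(X^{(l)}) converge to 0 exponentially for every initial value X^{(0)}. -/
import Mathlib

open scoped Matrix
open Filter

noncomputable section

attribute [local instance] Matrix.frobeniusNormedAddCommGroup

/-- Entrywise ReLU on `N × C` real matrices. -/
def relu {N C : ℕ} (X : Matrix (Fin N) (Fin C) ℝ) : Matrix (Fin N) (Fin C) ℝ :=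
  Matrix.of fun n c => max (X n c) 0

/-- `mlp [W₁, …, W_H] Y = σ(⋯σ(σ(Y)W₁)W₂⋯W_H)` : a multi-layer perceptron with entrywise
ReLU activations, applied row-wise to `Y ∈ ℝ^{N×C}`. -/
def mlp {N C : ℕ} (Ws : List (Matrix (Fin C) (Fin C) ℝ)) (Y : Matrix (Fin N) (Fin C) ℝ) :
    Matrix (Fin N) (Fin C) ℝ :=
  Ws.foldl (fun Z Wh => relu (Z * Wh)) (relu Y)

/-- The largest singular value of a square real matrix, i.e. the operator `2`-norm. -/
def maxSingularValue {C : ℕ} (W : Matrix (Fin C) (Fin C) ℝ) : ℝ :=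
  ‖LinearMap.toContinuousLinearMap (Matrix.toEuclideanLin W)‖

lemma frob_eq {a b : ℕ} (A : Matrix (Fin a) (Fin b) ℝ) :
    ‖A‖ = Real.sqrt (∑ i, ∑ j, (A i j)^2) := by
  rw [Matrix.frobenius_norm_def, Real.sqrt_eq_rpow]
  congr 1
  refine Finset.sum_congr rfl fun i _ => Finset.sum_congr rfl fun j _ => ?_
  rw [Real.rpow_two, Real.norm_eq_abs, sq_abs]

lemma mulVec_sq_le {a b : ℕ} (M : Matrix (Fin a) (Fin b) ℝ) (v : Fin b → ℝ) :
    ∑ i, (M.mulVec v i)^2 ≤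
      ‖LinearMap.toContinuousLinearMap (Matrix.toEuclideanLin M)‖^2 * ∑ j, (v j)^2 := by
  set L := LinearMap.toContinuousLinearMap (Matrix.toEuclideanLin M)
  have h := L.le_opNorm ((WithLp.equiv 2 (Fin b → ℝ)).symm v)
  have h2 : (L ((WithLp.equiv 2 (Fin b → ℝ)).symm v)) =
      (WithLp.equiv 2 (Fin a → ℝ)).symm (M.mulVec v) := by
    simp [L, LinearMap.coe_toContinuousLinearMap']
  rw [h2] at h
  have hn1 : ‖(WithLp.equiv 2 (Fin a → ℝ)).symm (M.mulVec v)‖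
      = Real.sqrt (∑ i, (M.mulVec v i)^2) := by
    rw [EuclideanSpace.norm_eq]
    simp [Real.norm_eq_abs, sq_abs]
  have hn2 : ‖(WithLp.equiv 2 (Fin b → ℝ)).symm v‖ = Real.sqrt (∑ j, (v j)^2) := by
    rw [EuclideanSpace.norm_eq]
    simp [Real.norm_eq_abs, sq_abs]
  rw [hn1, hn2] at h
  have hm := mul_self_le_mul_self (Real.sqrt_nonneg _) h
  calc ∑ i, (M.mulVec v i)^2
      = Real.sqrt (∑ i, (M.mulVec v i)^2) * Real.sqrt (∑ i, (M.mulVec v i)^2) := by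
        rw [Real.mul_self_sqrt (Finset.sum_nonneg fun i _ => sq_nonneg _)]
    _ ≤ (‖L‖ * Real.sqrt (∑ j, (v j)^2)) * (‖L‖ * Real.sqrt (∑ j, (v j)^2)) := hm
    _ = ‖L‖^2 * ∑ j, (v j)^2 := by
        have hS : Real.sqrt (∑ j, (v j)^2) * Real.sqrt (∑ j, (v j)^2) = ∑ j, (v j)^2 :=
          Real.mul_self_sqrt (Finset.sum_nonneg fun j _ => sq_nonneg (v j))
        linear_combination (‖L‖^2) * hS

lemma maxSV_nonneg {C : ℕ} (W : Matrix (Fin C) (Fin C) ℝ) : 0 ≤ maxSingularValue W :=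
  norm_nonneg _

lemma maxSV_transpose {C : ℕ} (W : Matrix (Fin C) (Fin C) ℝ) :
    maxSingularValue Wᵀ = maxSingularValue W := by
  have hT : Wᵀ = Wᴴ := by
    ext i j; simp [Matrix.conjTranspose_apply, Matrix.transpose_apply]
  unfold maxSingularValue
  rw [hT, Matrix.toEuclideanLin_conjTranspose_eq_adjoint,
    LinearMap.adjoint_toContinuousLinearMap]
  exact ContinuousLinearMap.adjoint.norm_map _

/-- squared-sum bound plus nonneg constant implies Frobenius norm bound. -/
lemma frob_le_of_sq_le {a b : ℕ} (A : Matrix (Fin a) (Fin b) ℝ)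
    (B : Matrix (Fin a) (Fin b) ℝ) (c : ℝ) (hc : 0 ≤ c)
    (h : ∑ i, ∑ j, (A i j)^2 ≤ c^2 * ∑ i, ∑ j, (B i j)^2) : ‖A‖ ≤ c * ‖B‖ := by
  rw [frob_eq, frob_eq]
  calc Real.sqrt (∑ i, ∑ j, (A i j)^2)
      ≤ Real.sqrt (c^2 * ∑ i, ∑ j, (B i j)^2) := Real.sqrt_le_sqrt h
    _ = c * Real.sqrt (∑ i, ∑ j, (B i j)^2) := by
        rw [Real.sqrt_mul (sq_nonneg c), Real.sqrt_sq hc]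

lemma frob_mul_left {N C : ℕ} (P : Matrix (Fin N) (Fin N) ℝ) (Y : Matrix (Fin N) (Fin C) ℝ) :
    ‖P * Y‖ ≤ ‖LinearMap.toContinuousLinearMap (Matrix.toEuclideanLin P)‖ * ‖Y‖ := by
  apply frob_le_of_sq_le _ _ _ (norm_nonneg _)
  rw [Finset.sum_comm, Finset.sum_comm (γ := Fin N) (s := Finset.univ), Finset.mul_sum]
  refine Finset.sum_le_sum fun c _ => ?_
  have h := mulVec_sq_le P (fun n => Y n c)
  have he : ∀ n, (P * Y) n c = P.mulVec (fun n => Y n c) n := by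
    intro n; simp [Matrix.mul_apply, Matrix.mulVec, dotProduct]
  calc ∑ n, ((P * Y) n c)^2 = ∑ n, (P.mulVec (fun n => Y n c) n)^2 :=
        Finset.sum_congr rfl fun n _ => by rw [he n]
    _ ≤ ‖LinearMap.toContinuousLinearMap (Matrix.toEuclideanLin P)‖^2 * ∑ n, (Y n c)^2 := h

lemma frob_mul_right {N C : ℕ} (Z : Matrix (Fin N) (Fin C) ℝ) (W : Matrix (Fin C) (Fin C) ℝ) :
    ‖Z * W‖ ≤ maxSingularValue W * ‖Z‖ := by
  apply frob_le_of_sq_le _ _ _ (maxSV_nonneg W)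
  rw [Finset.mul_sum]
  refine Finset.sum_le_sum fun n _ => ?_
  have h := mulVec_sq_le Wᵀ (fun c => Z n c)
  have he : ∀ k, (Z * W) n k = Wᵀ.mulVec (fun c => Z n c) k := by
    intro k
    simp [Matrix.mul_apply, Matrix.mulVec, dotProduct, Matrix.transpose_apply, mul_comm]
  have hW : ‖LinearMap.toContinuousLinearMap (Matrix.toEuclideanLin Wᵀ)‖ = maxSingularValue W :=
    maxSV_transpose W
  calc ∑ k, ((Z * W) n k)^2 = ∑ k, (Wᵀ.mulVec (fun c => Z n c) k)^2 := by
        refine Finset.sum_congr rfl fun k _ => by rw [he k]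
    _ ≤ ‖LinearMap.toContinuousLinearMap (Matrix.toEuclideanLin Wᵀ)‖^2 * ∑ c, (Z n c)^2 := h
    _ = (maxSingularValue W)^2 * ∑ c, (Z n c)^2 := by rw [hW]

lemma frob_relu_le {N C : ℕ} (Y : Matrix (Fin N) (Fin C) ℝ) : ‖relu Y‖ ≤ ‖Y‖ := by
  rw [frob_eq, frob_eq]
  apply Real.sqrt_le_sqrt
  refine Finset.sum_le_sum fun n _ => Finset.sum_le_sum fun c _ => ?_
  show (max (Y n c) 0)^2 ≤ (Y n c)^2
  rcases le_total (Y n c) 0 with h | h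
  · rw [max_eq_right h]; simpa using sq_nonneg (Y n c)
  · rw [max_eq_left h]

lemma prod_sv_nonneg {C : ℕ} (Ws : List (Matrix (Fin C) (Fin C) ℝ)) :
    0 ≤ (Ws.map maxSingularValue).prod :=
  List.prod_nonneg (by
    intro x hx
    rcases List.mem_map.1 hx with ⟨W, _, rfl⟩
    exact maxSV_nonneg W)

lemma foldl_le {N C : ℕ} (Ws : List (Matrix (Fin C) (Fin C) ℝ)) :
    ∀ Z : Matrix (Fin N) (Fin C) ℝ,
      ‖Ws.foldl (fun Z Wh => relu (Z * Wh)) Z‖ ≤ (Ws.map maxSingularValue).prod * ‖Z‖ := by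
  induction Ws with
  | nil => intro Z; simp
  | cons W Ws ih =>
    intro Z
    have h1 : ‖relu (Z * W)‖ ≤ maxSingularValue W * ‖Z‖ :=
      le_trans (frob_relu_le _) (frob_mul_right Z W)
    calc ‖(W :: Ws).foldl (fun Z Wh => relu (Z * Wh)) Z‖
        = ‖Ws.foldl (fun Z Wh => relu (Z * Wh)) (relu (Z * W))‖ := by rw [List.foldl_cons]
      _ ≤ (Ws.map maxSingularValue).prod * ‖relu (Z * W)‖ := ih _
      _ ≤ (Ws.map maxSingularValue).prod * (maxSingularValue W * ‖Z‖) :=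
          mul_le_mul_of_nonneg_left h1 (prod_sv_nonneg Ws)
      _ = ((W :: Ws).map maxSingularValue).prod * ‖Z‖ := by
          simp [List.map_cons, List.prod_cons]; ring

theorem frobenius_iterates_le {N C : ℕ} (hN : 0 < N) (hC : 0 < C)
    (P : Matrix (Fin N) (Fin N) ℝ) (hP : P.IsSymm) (lam : ℝ)
    (hlam : ‖LinearMap.toContinuousLinearMap (Matrix.toEuclideanLin P)‖ ≤ lam)
    (Ws : ℕ → List (Matrix (Fin C) (Fin C) ℝ)) (hWs : ∀ l, 0 < (Ws l).length)
    (s : ℝ) (hs : ∀ l, ((Ws l).map maxSingularValue).prod ≤ s)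
    (X : ℕ → Matrix (Fin N) (Fin C) ℝ)
    (hrec : ∀ l, X (l + 1) = mlp (Ws l) (P * X l)) :
    (∀ l (Y : Matrix (Fin N) (Fin C) ℝ), ‖mlp (Ws l) (P * Y)‖ ≤ s * lam * ‖Y‖) ∧
      (∀ l, ‖X l‖ ≤ (s * lam) ^ l * ‖X 0‖) ∧
      (s * lam < 1 → Tendsto (fun l => ‖X l‖) atTop (nhds 0)) := by
  have hlam0 : 0 ≤ lam := le_trans (norm_nonneg _) hlam
  have hs0 : 0 ≤ s := le_trans (prod_sv_nonneg (Ws 0)) (hs 0)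
  have main : ∀ l (Y : Matrix (Fin N) (Fin C) ℝ), ‖mlp (Ws l) (P * Y)‖ ≤ s * lam * ‖Y‖ := by
    intro l Y
    have h1 : ‖mlp (Ws l) (P * Y)‖ ≤ ((Ws l).map maxSingularValue).prod * ‖relu (P * Y)‖ :=
      foldl_le (Ws l) (relu (P * Y))
    have h2 : ‖relu (P * Y)‖ ≤ lam * ‖Y‖ := by
      refine le_trans (frob_relu_le _) (le_trans (frob_mul_left P Y) ?_)
      exact mul_le_mul_of_nonneg_right hlam (norm_nonneg _)
    calc ‖mlp (Ws l) (P * Y)‖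
        ≤ ((Ws l).map maxSingularValue).prod * ‖relu (P * Y)‖ := h1
      _ ≤ ((Ws l).map maxSingularValue).prod * (lam * ‖Y‖) :=
          mul_le_mul_of_nonneg_left h2 (prod_sv_nonneg _)
      _ ≤ s * (lam * ‖Y‖) :=
          mul_le_mul_of_nonneg_right (hs l) (by positivity)
      _ = s * lam * ‖Y‖ := by ring
  have iter : ∀ l, ‖X l‖ ≤ (s * lam) ^ l * ‖X 0‖ := by
    intro l
    induction l with
    | zero => simp
    | succ l ih =>
      calc ‖X (l + 1)‖ = ‖mlp (Ws l) (P * X l)‖ := by rw [hrec l]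
        _ ≤ s * lam * ‖X l‖ := main l (X l)
        _ ≤ s * lam * ((s * lam) ^ l * ‖X 0‖) :=
            mul_le_mul_of_nonneg_left ih (by positivity)
        _ = (s * lam) ^ (l + 1) * ‖X 0‖ := by ring
  refine ⟨main, iter, fun hlt => ?_⟩
  have hsl : 0 ≤ s * lam := by positivity
  have ht : Tendsto (fun l : ℕ => (s * lam) ^ l * ‖X 0‖) atTop (nhds 0) := by
    have := (tendsto_pow_atTop_nhds_zero_of_lt_one hsl hlt).mul_const (‖X 0‖)
    simpa using this
  exact squeeze_zero (fun l => norm_nonneg _) iter ht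

end
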